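/- Suppose $\omega_0 = \mu + g$ where $\mu$ is a finite nonnegative measure on $\mathbb{T}^2$ and $g \in L^1(\mathbb{T}^2)$, and let $K_N$ and $\psi_{\rho_N}$ be as in the suitable-initial-data construction with $\|K_N - \psi_{\rho_N}\|_{L^1} \to 0$. Set $\omega_N(\cdot,0) = K_N \ast \omega_0$. Then for any $\epsilon > 0$ there exist $c > 0$ and $N_0$ such that $\int_{\mathbb{T}^2} [\omega_N(\cdot,0) + c]_- \, dx < \epsilon$ for all $N \ge N_0$. -/

import Mathlib

open MeasureTheory Real
open scoped ENNReal

noncomputable section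

instance : Fact (0 < 2 * π) := ⟨by positivity⟩

/-- The two-dimensional torus `𝕋² = (ℝ/2πℤ)²`. -/
abbrev T2 := AddCircle (2 * π) × AddCircle (2 * π)

/-- The negative part `[w]₋ = max(0, -w)`. -/
def negPt (w : ℝ) : ℝ := max 0 (-w)

instance : Measure.IsAddRightInvariant (volume : Measure T2) :=
  (inferInstance : Measure.IsAddRightInvariant
    ((volume : Measure (AddCircle (2*π))).prod (volume : Measure (AddCircle (2*π)))))

instance : Measure.IsAddLeftInvariant (volume : Measure T2) :=
  (inferInstance : Measure.IsAddLeftInvariant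
    ((volume : Measure (AddCircle (2*π))).prod (volume : Measure (AddCircle (2*π)))))

instance : Measure.IsNegInvariant (volume : Measure T2) := by
  constructor
  have h := Measure.measurePreserving_neg (volume : Measure (AddCircle (2*π)))
  exact (h.prod h).map_eq

instance : OpensMeasurableSpace (T2 × T2) := Prod.opensMeasurableSpace

lemma negPt_nonneg (w : ℝ) : 0 ≤ negPt w := le_max_left _ _

lemma negPt_le_abs (w : ℝ) : negPt w ≤ |w| := max_le (abs_nonneg _) (neg_le_abs _)

lemma continuous_negPt : Continuous negPt := continuous_const.max continuous_neg

lemma neg_negPt_le (w : ℝ) : -negPt w ≤ w := by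
  have := le_max_right 0 (-w)
  simp only [negPt]; linarith

lemma negPt_le_add (u v : ℝ) : negPt u ≤ negPt v + |u - v| := by
  refine max_le (add_nonneg (negPt_nonneg v) (abs_nonneg _)) ?_
  have h1 : -v ≤ negPt v := le_max_right _ _
  have h2 : v - u ≤ |u - v| := by rw [abs_sub_comm]; exact le_abs_self _
  linarith

lemma negPt_anti {u v : ℝ} (h : u ≤ v) : negPt v ≤ negPt u :=
  max_le (le_max_left _ _) (le_trans (neg_le_neg h) (le_max_right _ _))

lemma negPt_le_of {u r : ℝ} (hr : 0 ≤ r) (h : -r ≤ u) : negPt u ≤ r :=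
  max_le hr (by linarith)

lemma negPt_eq_zero {w : ℝ} (h : 0 ≤ w) : negPt w = 0 :=
  max_eq_left (neg_nonpos.mpr h)

lemma cont_bdd (h : T2 → ℝ) (hh : Continuous h) : ∃ C, ∀ z, |h z| ≤ C := by
  obtain ⟨z, _, hz⟩ := isCompact_univ.exists_isMaxOn Set.univ_nonempty hh.abs.continuousOn
  exact ⟨|h z|, fun x => hz (Set.mem_univ x)⟩

lemma cont_integrable (h : T2 → ℝ) (hh : Continuous h) (ν : Measure T2) [IsFiniteMeasure ν] :
    Integrable h ν :=
  hh.integrable_of_hasCompactSupport (HasCompactSupport.of_compactSpace h)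

/-- Integrability of `(x,y) ↦ h(x-y) * w(y)` on the product. -/
lemma conv_prod_integrable (ν : Measure T2) [IsFiniteMeasure ν] (h : T2 → ℝ)
    (hh : Continuous h) (w : T2 → ℝ) (hw : Integrable w ν) :
    Integrable (fun p : T2 × T2 => h (p.1 - p.2) * w p.2) (volume.prod ν) := by
  obtain ⟨C, hC⟩ := cont_bdd h hh
  have hwsm : AEStronglyMeasurable (fun p : T2 × T2 => w p.2) (volume.prod ν) :=
    hw.aestronglyMeasurable.comp_quasiMeasurePreserving Measure.quasiMeasurePreserving_snd
  have hwint : Integrable (fun p : T2 × T2 => w p.2) (volume.prod ν) := by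
    rw [integrable_prod_iff hwsm]
    refine ⟨Filter.Eventually.of_forall fun x => hw, ?_⟩
    simp only [Real.norm_eq_abs]
    exact integrable_const _
  exact hwint.bdd_mul ((hh.comp (continuous_fst.sub continuous_snd)).aestronglyMeasurable)
    (Filter.Eventually.of_forall fun p => by simpa [Real.norm_eq_abs] using hC (p.1 - p.2))

/-- The convolution `x ↦ ∫ h(x-y) w(y) dν(y)` is integrable. -/
lemma conv_integrable (ν : Measure T2) [IsFiniteMeasure ν] (h : T2 → ℝ)
    (hh : Continuous h) (w : T2 → ℝ) (hw : Integrable w ν) :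
    Integrable (fun x => ∫ y, h (x - y) * w y ∂ν) volume :=
  (conv_prod_integrable ν h hh w hw).integral_prod_left

/-- Fubini for the convolution. -/
lemma conv_integral (ν : Measure T2) [IsFiniteMeasure ν] (h : T2 → ℝ)
    (hh : Continuous h) (w : T2 → ℝ) (hw : Integrable w ν) :
    ∫ x, ∫ y, h (x - y) * w y ∂ν = (∫ z, h z) * ∫ y, w y ∂ν := by
  have hswap := integral_integral_swap (f := fun x y => h (x - y) * w y)
    (conv_prod_integrable ν h hh w hw)
  rw [hswap]
  have key : ∀ y : T2, (∫ x, h (x - y) * w y) = (∫ z, h z) * w y := by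
    intro y
    rw [integral_mul_const, integral_sub_right_eq_self h y]
  rw [integral_congr_ae (Filter.Eventually.of_forall key)]
  exact integral_const_mul _ _

/-- Suppose `ω₀ = μ + g` with `μ` a finite nonnegative measure on `𝕋²` and `g ∈ L¹(𝕋²)`.
Let `ψ_N ≥ 0` be smooth probability densities and `K_N` continuous kernels with
`‖K_N - ψ_N‖_{L¹} → 0`, and set `ω_N(·,0) = K_N ∗ ω₀ = K_N ∗ μ + K_N ∗ g`. Then for any
`ε > 0` there exist `c > 0` and `N₀` such that `∫ [ω_N(·,0) + c]₋ dx < ε` for all `N ≥ N₀`. -/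
theorem stmt13 (μ : Measure T2) [IsFiniteMeasure μ] (g : T2 → ℝ)
    (hg : Integrable g volume) (K ψ : ℕ → T2 → ℝ)
    (hK : ∀ N, Continuous (K N)) (hψc : ∀ N, Continuous (ψ N))
    (hψ0 : ∀ N x, 0 ≤ ψ N x) (hψ1 : ∀ N, ∫ x, ψ N x = 1)
    (hconv : Filter.Tendsto (fun N => ∫ x, |K N x - ψ N x|) Filter.atTop (nhds 0)) :
    ∀ ε > (0 : ℝ), ∃ c > (0 : ℝ), ∃ N₀ : ℕ, ∀ N ≥ N₀,
      (∫ x, negPt ((∫ y, K N (x - y) ∂μ) + (∫ y, K N (x - y) * g y) + c)) < ε := by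
  intro ε hε
  -- choice of c
  have hsm : ∀ n : ℕ, AEStronglyMeasurable (fun y => negPt (g y + ((n : ℝ) + 1))) volume :=
    fun n => continuous_negPt.comp_aestronglyMeasurable
      (hg.aestronglyMeasurable.add aestronglyMeasurable_const)
  have hs0 : Filter.Tendsto (fun n : ℕ => ∫ y, negPt (g y + ((n : ℝ) + 1)))
      Filter.atTop (nhds 0) := by
    have h0 : (0 : ℝ) = ∫ _ : T2, (0 : ℝ) := by simp
    rw [h0]
    refine tendsto_integral_of_dominated_convergence (fun y => |g y|) hsm hg.abs ?_ ?_
    · intro n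
      refine Filter.Eventually.of_forall fun y => ?_
      rw [Real.norm_eq_abs, abs_of_nonneg (negPt_nonneg _)]
      exact le_trans (negPt_anti (by have := Nat.cast_nonneg (α := ℝ) n; linarith : g y ≤ g y + ((n : ℝ) + 1)))
        (negPt_le_abs _)
    · refine Filter.Eventually.of_forall fun y => ?_
      refine tendsto_atTop_of_eventually_const (i₀ := Nat.ceil |g y|) fun n hn => ?_
      have : |g y| ≤ (n : ℝ) := le_trans (Nat.le_ceil _) (by exact_mod_cast hn)
      have hgy : -(n : ℝ) ≤ g y := by
        have := neg_abs_le (g y); linarith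
      exact negPt_eq_zero (by linarith)
  obtain ⟨n, hn⟩ := (hs0.eventually_lt_const (by linarith : (0:ℝ) < ε/2)).exists
  set c : ℝ := (n : ℝ) + 1 with hc
  have hc0 : 0 < c := by positivity
  -- choice of N₀
  set M : ℝ := (μ Set.univ).toReal + ∫ y, |g y| with hM
  have hM0 : 0 ≤ ∫ y, |g y| := integral_nonneg fun y => abs_nonneg _
  have hMnn : 0 ≤ M := by positivity
  have hNconv : Filter.Tendsto (fun N => (∫ x, |K N x - ψ N x|) * M)
      Filter.atTop (nhds 0) := by
    simpa using hconv.mul_const M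
  obtain ⟨N₀, hN₀⟩ := Filter.eventually_atTop.mp
    (hNconv.eventually_lt_const (by linarith : (0:ℝ) < ε/2))
  refine ⟨c, hc0, N₀, fun N hN => ?_⟩
  -- notation
  set h : T2 → ℝ := fun z => |K N z - ψ N z| with hh_def
  have hh : Continuous h := ((hK N).sub (hψc N)).abs
  have hKc := hK N
  have hψcc := hψc N
  -- global integrability facts
  have ineg : Integrable (fun y => negPt (g y + c)) volume := by
    refine Integrable.mono' ((hg.add (integrable_const c)).abs)
      (continuous_negPt.comp_aestronglyMeasurable
        (hg.aestronglyMeasurable.add aestronglyMeasurable_const))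
      (Filter.Eventually.of_forall fun y => ?_)
    rw [Real.norm_eq_abs, abs_of_nonneg (negPt_nonneg _)]
    exact negPt_le_abs _
  have i1μ : Integrable (fun _ : T2 => (1:ℝ)) μ := integrable_const _
  -- integrability of the convolutions (as functions of x)
  have hD1 : Integrable (fun x => ∫ y, h (x - y) ∂μ) volume := by
    have := conv_integrable μ h hh (fun _ => 1) i1μ
    simpa only [mul_one] using this
  have hD2 : Integrable (fun x => ∫ y, h (x - y) * |g y|) volume :=
    conv_integrable volume h hh (fun y => |g y|) hg.abs
  have hE : Integrable (fun x => ∫ y, ψ N (x - y) * negPt (g y + c)) volume :=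
    conv_integrable volume (ψ N) hψcc (fun y => negPt (g y + c)) ineg
  have hA : Integrable (fun x => ∫ y, K N (x - y) ∂μ) volume := by
    have := conv_integrable μ (K N) hKc (fun _ => 1) i1μ
    simpa only [mul_one] using this
  have hB : Integrable (fun x => ∫ y, K N (x - y) * g y) volume :=
    conv_integrable volume (K N) hKc g hg
  -- bounds on K, ψ
  obtain ⟨CK, hCK⟩ := cont_bdd (K N) hKc
  obtain ⟨Cψ, hCψ⟩ := cont_bdd (ψ N) hψcc
  obtain ⟨Ch, hCh⟩ := cont_bdd h hh
  -- pointwise bound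
  have key : ∀ x : T2,
      negPt ((∫ y, K N (x - y) ∂μ) + (∫ y, K N (x - y) * g y) + c) ≤
      (∫ y, h (x - y) ∂μ) + (∫ y, h (x - y) * |g y|) +
        (∫ y, ψ N (x - y) * negPt (g y + c)) := by
    intro x
    have iK : Integrable (fun y => K N (x - y)) μ :=
      cont_integrable _ (hKc.comp (continuous_const.sub continuous_id)) μ
    have iψ : Integrable (fun y => ψ N (x - y)) μ :=
      cont_integrable _ (hψcc.comp (continuous_const.sub continuous_id)) μ
    have iKg : Integrable (fun y => K N (x - y) * g y) volume :=
      hg.bdd_mul ((hKc.comp (continuous_const.sub continuous_id)).aestronglyMeasurable)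
        (Filter.Eventually.of_forall fun y => by simpa [Real.norm_eq_abs] using hCK (x - y))
    have iψg : Integrable (fun y => ψ N (x - y) * g y) volume :=
      hg.bdd_mul ((hψcc.comp (continuous_const.sub continuous_id)).aestronglyMeasurable)
        (Filter.Eventually.of_forall fun y => by simpa [Real.norm_eq_abs] using hCψ (x - y))
    have iψgc : Integrable (fun y => ψ N (x - y) * (g y + c)) volume :=
      (hg.add (integrable_const c)).bdd_mul
        ((hψcc.comp (continuous_const.sub continuous_id)).aestronglyMeasurable)
        (Filter.Eventually.of_forall fun y => by simpa [Real.norm_eq_abs] using hCψ (x - y))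
    have iψv : Integrable (fun y => ψ N (x - y)) volume :=
      cont_integrable _ (hψcc.comp (continuous_const.sub continuous_id)) volume
    have iψneg : Integrable (fun y => ψ N (x - y) * negPt (g y + c)) volume :=
      ineg.bdd_mul ((hψcc.comp (continuous_const.sub continuous_id)).aestronglyMeasurable)
        (Filter.Eventually.of_forall fun y => by simpa [Real.norm_eq_abs] using hCψ (x - y))
    -- abbreviations
    set A := ∫ y, K N (x - y) ∂μ
    set B := ∫ y, K N (x - y) * g y
    set A' := ∫ y, ψ N (x - y) ∂μ
    set B' := ∫ y, ψ N (x - y) * g y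
    set D1 := ∫ y, h (x - y) ∂μ
    set D2 := ∫ y, h (x - y) * |g y|
    set E := ∫ y, ψ N (x - y) * negPt (g y + c)
    have hAA' : |A - A'| ≤ D1 := by
      rw [← integral_sub iK iψ]
      calc |∫ y, (K N (x - y) - ψ N (x - y)) ∂μ|
          ≤ ∫ y, |K N (x - y) - ψ N (x - y)| ∂μ := by
            simpa [Real.norm_eq_abs] using
              norm_integral_le_integral_norm (fun y => K N (x - y) - ψ N (x - y)) (μ := μ)
        _ = D1 := rfl
    have hBB' : |B - B'| ≤ D2 := by
      rw [← integral_sub iKg iψg]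
      calc |∫ y, (K N (x - y) * g y - ψ N (x - y) * g y)|
          ≤ ∫ y, |K N (x - y) * g y - ψ N (x - y) * g y| := by
            simpa [Real.norm_eq_abs] using
              norm_integral_le_integral_norm
                (fun y => K N (x - y) * g y - ψ N (x - y) * g y) (μ := volume)
        _ = D2 := by
            refine integral_congr_ae (Filter.Eventually.of_forall fun y => ?_)
            show |K N (x - y) * g y - ψ N (x - y) * g y| = h (x - y) * |g y|
            rw [← sub_mul, abs_mul]
    have hA'0 : 0 ≤ A' := integral_nonneg fun y => hψ0 N _
    have hE0 : 0 ≤ E := integral_nonneg fun y => mul_nonneg (hψ0 N _) (negPt_nonneg _)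
    have hψint1 : (∫ y, ψ N (x - y)) = 1 := by
      rw [integral_sub_left_eq_self (ψ N) volume x]; exact hψ1 N
    have hB'c : -E ≤ B' + c := by
      have h1 : B' + c = ∫ y, ψ N (x - y) * (g y + c) := by
        have : (fun y => ψ N (x - y) * (g y + c)) =
            fun y => ψ N (x - y) * g y + ψ N (x - y) * c := funext fun y => mul_add _ _ _
        rw [this, integral_add iψg (iψv.mul_const c),
          integral_mul_const, hψint1, one_mul]
      have h2 : (∫ y, ψ N (x - y) * (-negPt (g y + c))) = -E := by
        rw [← integral_neg]
        exact integral_congr_ae (Filter.Eventually.of_forall fun y => mul_neg _ _)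
      have iψnegneg : Integrable (fun y => ψ N (x - y) * (-negPt (g y + c))) volume :=
        iψneg.neg.congr (Filter.Eventually.of_forall fun y => (mul_neg _ _).symm)
      rw [h1, ← h2]
      refine integral_mono iψnegneg iψgc fun y => ?_
      exact mul_le_mul_of_nonneg_left (neg_negPt_le _) (hψ0 N _)
    calc negPt (A + B + c)
        ≤ negPt (A' + B' + c) + |A + B + c - (A' + B' + c)| := negPt_le_add _ _
      _ ≤ negPt (B' + c) + (|A - A'| + |B - B'|) := by
          refine add_le_add (negPt_anti (by linarith)) ?_
          have : A + B + c - (A' + B' + c) = (A - A') + (B - B') := by ring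
          rw [this]; exact abs_add_le _ _
      _ ≤ E + (D1 + D2) := add_le_add (negPt_le_of hE0 hB'c) (add_le_add hAA' hBB')
      _ = D1 + D2 + E := by ring
  -- LHS integrable
  have hLHSm : AEStronglyMeasurable
      (fun x => negPt ((∫ y, K N (x - y) ∂μ) + (∫ y, K N (x - y) * g y) + c)) volume :=
    continuous_negPt.comp_aestronglyMeasurable
      ((hA.aestronglyMeasurable.add hB.aestronglyMeasurable).add aestronglyMeasurable_const)
  have hRHSint : Integrable (fun x => (∫ y, h (x - y) ∂μ) + (∫ y, h (x - y) * |g y|) +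
      (∫ y, ψ N (x - y) * negPt (g y + c))) volume := (hD1.add hD2).add hE
  have hLHSint : Integrable
      (fun x => negPt ((∫ y, K N (x - y) ∂μ) + (∫ y, K N (x - y) * g y) + c)) volume := by
    refine Integrable.mono' hRHSint hLHSm (Filter.Eventually.of_forall fun x => ?_)
    rw [Real.norm_eq_abs, abs_of_nonneg (negPt_nonneg _)]
    exact key x
  -- integral bound
  have step1 : (∫ x, negPt ((∫ y, K N (x - y) ∂μ) + (∫ y, K N (x - y) * g y) + c)) ≤
      (∫ x, (∫ y, h (x - y) ∂μ)) + (∫ x, (∫ y, h (x - y) * |g y|)) +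
      (∫ x, (∫ y, ψ N (x - y) * negPt (g y + c))) := by
    calc (∫ x, negPt ((∫ y, K N (x - y) ∂μ) + (∫ y, K N (x - y) * g y) + c))
        ≤ ∫ x, ((∫ y, h (x - y) ∂μ) + (∫ y, h (x - y) * |g y|) +
            (∫ y, ψ N (x - y) * negPt (g y + c))) := integral_mono hLHSint hRHSint key
      _ = _ := by
          have hsum : Integrable (fun x => (∫ y, h (x - y) ∂μ) +
              (∫ y, h (x - y) * |g y|)) volume := hD1.add hD2
          rw [integral_add hsum hE, integral_add hD1 hD2]
  -- compute the three integrals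
  have e1 : (∫ x, (∫ y, h (x - y) ∂μ)) = (∫ z, h z) * (μ Set.univ).toReal := by
    have := conv_integral μ h hh (fun _ => 1) i1μ
    simp only [mul_one] at this
    rw [this, integral_const, smul_eq_mul, mul_one, measureReal_def]
  have e2 : (∫ x, (∫ y, h (x - y) * |g y|)) = (∫ z, h z) * ∫ y, |g y| :=
    conv_integral volume h hh (fun y => |g y|) hg.abs
  have e3 : (∫ x, (∫ y, ψ N (x - y) * negPt (g y + c))) = ∫ y, negPt (g y + c) := by
    rw [conv_integral volume (ψ N) hψcc (fun y => negPt (g y + c)) ineg, hψ1 N, one_mul]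
  have hhconv : (∫ z, h z) * M < ε / 2 := hN₀ N hN
  have hE2 : (∫ y, negPt (g y + c)) < ε / 2 := hn
  have hμnn : 0 ≤ (μ Set.univ).toReal := ENNReal.toReal_nonneg
  calc (∫ x, negPt ((∫ y, K N (x - y) ∂μ) + (∫ y, K N (x - y) * g y) + c))
      ≤ (∫ z, h z) * (μ Set.univ).toReal + (∫ z, h z) * (∫ y, |g y|) +
        (∫ y, negPt (g y + c)) := by rw [← e1, ← e2, ← e3]; exact step1
    _ = (∫ z, h z) * M + (∫ y, negPt (g y + c)) := by rw [hM]; ring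
    _ < ε / 2 + ε / 2 := add_lt_add hhconv hE2
    _ = ε := by ring
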